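/- For s₁ < 0 the Fourier transform does not map L²(ℝⁿ, w_{s₁}) boundedly into L²(ℝⁿ): there is no constant C such that ‖Ff‖_{L²} ≤ C ‖w_{s₁} f‖_{L²} for all Schwartz f. -/

import Mathlib

set_option maxHeartbeats 1000000

open MeasureTheory SchwartzMap Metric
open scoped RealInnerProductSpace ENNReal

noncomputable def w (n : ℕ) (α : ℝ) (x : EuclideanSpace ℝ (Fin n)) : ℝ :=
  (1 + ‖x‖ ^ 2) ^ (α / 2)

noncomputable def Fdef (n : ℕ) (f : EuclideanSpace ℝ (Fin n) → ℂ)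
    (ξ : EuclideanSpace ℝ (Fin n)) : ℂ :=
  (((2 * Real.pi) ^ (-(n : ℝ) / 2) : ℝ) : ℂ) *
    ∫ x, Complex.exp (-Complex.I * (⟪x, ξ⟫ : ℝ)) * f x

open scoped ContDiff in
noncomputable def mkSch {n : ℕ} (f : EuclideanSpace ℝ (Fin n) → ℂ) (h1 : ContDiff ℝ ∞ f)
    (h2 : HasCompactSupport f) : SchwartzMap (EuclideanSpace ℝ (Fin n)) ℂ where
  toFun := f
  smooth' := h1
  decay' := by
    intro k m
    have hc : Continuous fun x : EuclideanSpace ℝ (Fin n) =>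
        (‖x‖ ^ k) • iteratedFDeriv ℝ m f x :=
      (continuous_norm.pow k).smul (h1.continuous_iteratedFDeriv (by exact_mod_cast le_top))
    have hcs : HasCompactSupport fun x : EuclideanSpace ℝ (Fin n) =>
        (‖x‖ ^ k) • iteratedFDeriv ℝ m f x :=
      HasCompactSupport.intro (h2.iteratedFDeriv m) fun x hx => by
        rw [image_eq_zero_of_notMem_tsupport hx, smul_zero]
    obtain ⟨C, hC⟩ := hc.bounded_above_of_compact_support hcs
    refine ⟨C, fun x => ?_⟩
    have := hC x
    rwa [norm_smul, Real.norm_eq_abs, abs_of_nonneg (by positivity)] at this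

lemma mkSch_coe {n : ℕ} (f : EuclideanSpace ℝ (Fin n) → ℂ) (h1 h2) :
    ⇑(mkSch f h1 h2) = f := rfl

noncomputable def φ₀ (n : ℕ) : ContDiffBump (0 : EuclideanSpace ℝ (Fin n)) :=
  ⟨1, 2, one_pos, one_lt_two⟩

noncomputable def gA (n : ℕ) (a : EuclideanSpace ℝ (Fin n)) :
    EuclideanSpace ℝ (Fin n) → ℂ := fun x => ((φ₀ n) (x - a) : ℂ)

open scoped ContDiff in
lemma gA_smooth (n : ℕ) (a : EuclideanSpace ℝ (Fin n)) : ContDiff ℝ ∞ (gA n a) :=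
  (Complex.ofRealCLM.contDiff.comp (φ₀ n).contDiff).comp (contDiff_id.sub contDiff_const)

lemma gA_cont (n : ℕ) (a : EuclideanSpace ℝ (Fin n)) : Continuous (gA n a) :=
  (gA_smooth n a).continuous

lemma gA_cs (n : ℕ) (a : EuclideanSpace ℝ (Fin n)) : HasCompactSupport (gA n a) :=
  HasCompactSupport.intro (isCompact_closedBall a 2) fun x hx => by
    have : (2 : ℝ) ≤ dist (x - a) 0 := by
      simp only [dist_zero_right] at *
      simpa [dist_eq_norm] using le_of_not_gt (fun h => hx (mem_closedBall_iff_norm.2 h.le))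
    simp [gA, (φ₀ n).zero_of_le_dist this]

lemma gA_shift (n : ℕ) (a : EuclideanSpace ℝ (Fin n)) :
    (fun x => gA n 0 (x - a)) = gA n a := by
  funext x; simp [gA]

lemma exp_norm_one (r : ℝ) : ‖Complex.exp (-Complex.I * (r : ℂ))‖ = 1 := by
  simp [Complex.norm_exp]

lemma modulation (n : ℕ) (g : EuclideanSpace ℝ (Fin n) → ℂ) (a ξ : EuclideanSpace ℝ (Fin n)) :
    (∫ x, Complex.exp (-Complex.I * (⟪x, ξ⟫ : ℝ)) * g (x - a)) =
      Complex.exp (-Complex.I * (⟪a, ξ⟫ : ℝ)) *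
        ∫ x, Complex.exp (-Complex.I * (⟪x, ξ⟫ : ℝ)) * g x := by
  have h1 := integral_add_right_eq_self
    (μ := volume) (fun x : EuclideanSpace ℝ (Fin n) =>
      Complex.exp (-Complex.I * (⟪x, ξ⟫ : ℝ)) * g (x - a)) a
  rw [← h1]
  have h2 : ∀ x : EuclideanSpace ℝ (Fin n),
      Complex.exp (-Complex.I * (⟪x + a, ξ⟫ : ℝ)) * g (x + a - a) =
      Complex.exp (-Complex.I * (⟪a, ξ⟫ : ℝ)) *
        (Complex.exp (-Complex.I * (⟪x, ξ⟫ : ℝ)) * g x) := by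
    intro x
    rw [inner_add_left, add_sub_cancel_right]
    push_cast
    rw [mul_add, neg_mul, Complex.exp_add]
    ring
  simp_rw [h2]
  rw [integral_const_mul]

lemma choose_T (s₁ δ : ℝ) (hs₁ : s₁ < 0) (hδ : 0 < δ) :
    ∃ T : ℝ, 1 ≤ T ∧ ∀ r : ℝ, T ≤ r → (1 + r ^ 2) ^ (s₁ / 2) ≤ δ := by
  refine ⟨max (δ ^ (1 / s₁)) 1, le_max_right _ _, fun r hr => ?_⟩
  set T := max (δ ^ (1 / s₁)) 1 with hT
  have hTpos : 0 < T := lt_of_lt_of_le one_pos (le_max_right _ _)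
  have hrpos : 0 < r := lt_of_lt_of_le hTpos hr
  have h1 : (1 + r ^ 2 : ℝ) ^ (s₁ / 2) ≤ (r ^ 2 : ℝ) ^ (s₁ / 2) :=
    Real.rpow_le_rpow_of_nonpos (by positivity) (by linarith) (by linarith)
  have h2 : (r ^ 2 : ℝ) ^ (s₁ / 2) ≤ (T ^ 2 : ℝ) ^ (s₁ / 2) :=
    Real.rpow_le_rpow_of_nonpos (by positivity) (by nlinarith) (by linarith)
  have h3 : (T ^ 2 : ℝ) ^ (s₁ / 2) = T ^ s₁ := by
    rw [← Real.rpow_natCast T 2, ← Real.rpow_mul hTpos.le]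
    norm_num
    ring_nf
  have h4 : T ^ s₁ ≤ (δ ^ (1 / s₁)) ^ s₁ :=
    Real.rpow_le_rpow_of_nonpos (Real.rpow_pos_of_pos hδ _) (le_max_left _ _) hs₁.le
  have h5 : (δ ^ (1 / s₁)) ^ s₁ = δ := by
    rw [← Real.rpow_mul hδ.le, one_div, inv_mul_cancel₀ hs₁.ne, Real.rpow_one]
  linarith

lemma numeric (K N : ℝ≥0∞) (hK : 0 < K) (hN : N ≠ ∞) (C : ℝ) (hC : 0 < C) :
    ∃ δ : ℝ, 0 < δ ∧ ENNReal.ofReal C * (ENNReal.ofReal δ * N) < K := by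
  set K' := min K 1 with hK'
  have hK'pos : 0 < K' := lt_min hK zero_lt_one
  have hK'top : K' ≠ ∞ :=
    ne_top_of_le_ne_top (by norm_num) (min_le_right _ _)
  have hK'toReal : 0 < K'.toReal := ENNReal.toReal_pos hK'pos.ne' hK'top
  set M := N.toReal with hM
  refine ⟨K'.toReal / (2 * C * (M + 1)), by positivity, ?_⟩
  have hMnonneg : 0 ≤ M := ENNReal.toReal_nonneg
  have hNle : N ≤ ENNReal.ofReal (M + 1) := by
    rw [← ENNReal.ofReal_toReal hN]
    exact ENNReal.ofReal_le_ofReal (by linarith)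
  calc ENNReal.ofReal C * (ENNReal.ofReal (K'.toReal / (2 * C * (M + 1))) * N)
      ≤ ENNReal.ofReal C * (ENNReal.ofReal (K'.toReal / (2 * C * (M + 1))) *
        ENNReal.ofReal (M + 1)) := by gcongr
    _ = ENNReal.ofReal (C * (K'.toReal / (2 * C * (M + 1)) * (M + 1))) := by
        rw [ENNReal.ofReal_mul hC.le, ENNReal.ofReal_mul (by positivity)]
    _ = ENNReal.ofReal (K'.toReal / 2) := by
        congr 1
        field_simp
    _ < K' := by
        rw [ENNReal.ofReal_lt_iff_lt_toReal (by positivity) hK'top]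
        linarith
    _ ≤ K := min_le_left _ _

lemma wbound (h : EuclideanSpace ℝ (Fin n) → ℂ) (wt : EuclideanSpace ℝ (Fin n) → ℝ) (δ : ℝ)
    (hδ : 0 ≤ δ) (hb : ∀ x, ‖(wt x : ℂ) * h x‖ ≤ ‖(δ : ℝ) • h x‖) :
    eLpNorm (fun x => (wt x : ℂ) * h x) 2 volume ≤
      ENNReal.ofReal δ * eLpNorm h 2 volume := by
  calc eLpNorm (fun x => (wt x : ℂ) * h x) 2 volume
      ≤ eLpNorm ((δ : ℝ) • h) 2 volume := eLpNorm_mono hb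
    _ = (‖(δ:ℝ)‖₊ : ℝ≥0∞) * eLpNorm h 2 volume := eLpNorm_const_smul _ _ _ _
    _ = ENNReal.ofReal δ * eLpNorm h 2 volume := by
        rw [ENNReal.ofReal, Real.nnnorm_of_nonneg hδ, Real.toNNReal_of_nonneg hδ]

/-- For s₁ < 0 (and n ≥ 1), F is not bounded from L²(ℝⁿ, w_{s₁}) to L²(ℝⁿ): no constant
C satisfies ‖Ff‖₂ ≤ C ‖w_{s₁} f‖₂ for all Schwartz f. -/
theorem stmt16 (n : ℕ) (hn : 1 ≤ n) (s₁ : ℝ) (hs₁ : s₁ < 0) :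
    ¬ ∃ C : ℝ, ∀ f : SchwartzMap (EuclideanSpace ℝ (Fin n)) ℂ,
      eLpNorm (Fdef n (⇑f)) 2 volume ≤
        ENNReal.ofReal C * eLpNorm (fun x => (w n s₁ x : ℂ) * f x) 2 volume := by
  rintro ⟨C, hC⟩
  have hg0cont : Continuous (gA n 0) := gA_cont n 0
  have hg0eq : gA n 0 = fun x => ((φ₀ n) x : ℂ) := by
    funext x; simp [gA]
  -- continuity of the Fourier integral
  have hIcont : Continuous fun ξ : EuclideanSpace ℝ (Fin n) =>
      ∫ x, Complex.exp (-Complex.I * (⟪x, ξ⟫ : ℝ)) * gA n 0 x := by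
    apply continuous_of_dominated (bound := fun x => ‖gA n 0 x‖)
    · intro ξ
      exact ((Complex.continuous_exp.comp (continuous_const.mul
        (Complex.continuous_ofReal.comp (continuous_id.inner continuous_const)))).mul
        hg0cont).aestronglyMeasurable
    · intro ξ
      filter_upwards with x
      rw [norm_mul, exp_norm_one, one_mul]
    · exact (hg0cont.integrable_of_hasCompactSupport (gA_cs n 0)).norm
    · filter_upwards with x
      exact (Complex.continuous_exp.comp (continuous_const.mul
        (Complex.continuous_ofReal.comp (continuous_const.inner continuous_id)))).mul
        continuous_const
  have hFcont : Continuous (Fdef n (gA n 0)) := by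
    unfold Fdef
    exact continuous_const.mul hIcont
  -- nonvanishing at 0
  have hF0 : Fdef n (gA n 0) 0 ≠ 0 := by
    unfold Fdef
    have hI : (∫ x, Complex.exp (-Complex.I * (⟪x, (0 : EuclideanSpace ℝ (Fin n))⟫ : ℝ)) *
        gA n 0 x) = ((∫ x, (φ₀ n) x : ℝ) : ℂ) := by
      rw [hg0eq]
      simp_rw [inner_zero_right (𝕜 := ℝ), Complex.ofReal_zero, mul_zero, Complex.exp_zero,
        one_mul]
      exact integral_ofReal
    rw [hI]
    apply mul_ne_zero
    · exact_mod_cast (Real.rpow_pos_of_pos (by positivity) _).ne'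
    · exact_mod_cast (φ₀ n).integral_pos.ne'
  -- K > 0
  set K := eLpNorm (Fdef n (gA n 0)) 2 volume with hKdef
  have hK : 0 < K := by
    rcases eq_or_lt_of_le (show (0:ℝ≥0∞) ≤ K from bot_le) with h | h
    · exfalso
      have h0 := (eLpNorm_eq_zero_iff hFcont.aestronglyMeasurable (by norm_num)).1 h.symm
      have h0' : Fdef n (gA n 0) =ᵐ[volume] (fun _ => 0) := h0
      rw [Continuous.ae_eq_iff_eq (μ := volume) hFcont continuous_const] at h0'
      exact hF0 (by simpa using congrFun h0' 0)
    · exact h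
  set N := eLpNorm (gA n 0) 2 volume with hNdef
  have hN : N ≠ ∞ := (hg0cont.memLp_of_hasCompactSupport (p := 2) (gA_cs n 0)).2.ne
  -- all translates have the same Fourier L² norm
  have hFnorm : ∀ a : EuclideanSpace ℝ (Fin n),
      eLpNorm (Fdef n (gA n a)) 2 volume = K := by
    intro a
    apply eLpNorm_congr_norm_ae
    filter_upwards with ξ
    unfold Fdef
    rw [← gA_shift n a]
    rw [modulation n (gA n 0) a ξ]
    rw [norm_mul, norm_mul, norm_mul, exp_norm_one, one_mul]
  -- all translates have the same L² norm
  have hgnorm : ∀ a : EuclideanSpace ℝ (Fin n),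
      eLpNorm (gA n a) 2 volume = N := by
    intro a
    rw [← gA_shift n a]
    exact eLpNorm_comp_measurePreserving hg0cont.aestronglyMeasurable
      (measurePreserving_sub_right volume a)
  -- case split on C
  rcases le_or_gt C 0 with hCle | hCpos
  · have h := hC (mkSch (gA n 0) (gA_smooth n 0) (gA_cs n 0))
    simp only [mkSch_coe] at h
    rw [ENNReal.ofReal_eq_zero.2 hCle, zero_mul] at h
    exact absurd (le_antisymm h zero_le) hK.ne'
  obtain ⟨δ, hδpos, hδlt⟩ := numeric K N hK hN C hCpos
  obtain ⟨T, hT1, hTb⟩ := choose_T s₁ δ hs₁ hδpos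
  set a := (2 + T) • EuclideanSpace.single (⟨0, hn⟩ : Fin n) (1 : ℝ) with ha
  have hna : ‖a‖ = 2 + T := by
    rw [ha, norm_smul, EuclideanSpace.norm_single]
    simp [abs_of_nonneg (by linarith : (0:ℝ) ≤ 2 + T)]
  -- support bound
  have hsupp : ∀ x : EuclideanSpace ℝ (Fin n), gA n a x ≠ 0 → T ≤ ‖x‖ := by
    intro x hx
    have h2 : ‖x - a‖ < 2 := by
      by_contra h2'
      apply hx
      have : (2 : ℝ) ≤ dist (x - a) 0 := by
        rw [dist_zero_right]; exact not_lt.1 h2'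
      simp [gA, (φ₀ n).zero_of_le_dist this]
    have h3 : ‖x - (x - a)‖ ≤ ‖x‖ + ‖x - a‖ := norm_sub_le _ _
    rw [sub_sub_cancel] at h3
    rw [hna] at h3
    linarith
  -- pointwise weight bound
  have hwb : ∀ x : EuclideanSpace ℝ (Fin n),
      ‖(w n s₁ x : ℂ) * gA n a x‖ ≤ ‖(δ : ℝ) • gA n a x‖ := by
    intro x
    by_cases hx : gA n a x = 0
    · simp [hx]
    · rw [norm_mul, norm_smul, Complex.norm_real, Real.norm_eq_abs, Real.norm_eq_abs]
      have hw0 : 0 ≤ w n s₁ x := Real.rpow_nonneg (by positivity) _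
      rw [abs_of_nonneg hw0, abs_of_nonneg hδpos.le]
      exact mul_le_mul_of_nonneg_right (hTb ‖x‖ (hsupp x hx)) (norm_nonneg _)
  -- conclude
  have h := hC (mkSch (gA n a) (gA_smooth n a) (gA_cs n a))
  simp only [mkSch_coe] at h
  rw [hFnorm a] at h
  have hle : eLpNorm (fun x => (w n s₁ x : ℂ) * gA n a x) 2 volume ≤
      ENNReal.ofReal δ * N := by
    rw [← hgnorm a]
    exact wbound (gA n a) (w n s₁) δ hδpos.le hwb
  have : K ≤ ENNReal.ofReal C * (ENNReal.ofReal δ * N) :=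
    h.trans (mul_le_mul_right hle _)
  exact absurd this (not_le.2 hδlt)
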